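/- Let M be a 2×2 matrix with integer entries, let t > 1 be a real number, and let u, v be positive real numbers such that u/v is irrational and the column vector (−u, v) is an eigenvector of M with eigenvalue t⁻¹, i.e. M·(−u, v)ᵀ = t⁻¹·(−u, v)ᵀ. Then for every natural number m and all natural numbers a, b, a', b', one has t^{−m}·(b·v − a·u) = b'·v − a'·u if and only if the integer row vector (a, b)·M^m equals (a', b'). -/
import Mathlib

open Matrix

lemma int_eq_of_lin (u v : ℝ) (hv : 0 < v) (hirr : Irrational (u / v))
    (c d c' d' : ℤ) (h : (d : ℝ) * v - c * u = d' * v - c' * u) :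
    c = c' ∧ d = d' := by
  have hc : c = c' := by
    by_contra hne
    have hcc : ((c : ℝ) - c') ≠ 0 := by
      simpa [sub_eq_zero] using (fun h' => hne (by exact_mod_cast h' : c = c'))
    have : u / v = ((d : ℝ) - d') / ((c : ℝ) - c') := by
      field_simp
      linarith
    have : Irrational (((d : ℝ) - d') / ((c : ℝ) - c')) := this ▸ hirr
    rw [show ((d:ℝ) - d') / ((c:ℝ) - c') = (((d - d' : ℤ) / (c - c' : ℤ) : ℚ) : ℝ) by
      push_cast; ring] at this
    exact (Rat.not_irrational _) this
  refine ⟨hc, ?_⟩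
  have : (d : ℝ) * v = d' * v := by
    have : (c : ℝ) = c' := by exact_mod_cast hc
    rw [this] at h; linarith
  have := mul_right_cancel₀ hv.ne' this
  exact_mod_cast this

theorem free_action_of_power_triples
    (M : Matrix (Fin 2) (Fin 2) ℤ) (t u v : ℝ)
    (ht : 1 < t) (hu : 0 < u) (hv : 0 < v) (hirr : Irrational (u / v))
    (heig : (M.map (Int.cast : ℤ → ℝ)).mulVec ![-u, v] = t⁻¹ • ![-u, v]) :
    ∀ m a b a' b' : ℕ,
      t ^ (-(m : ℤ)) * ((b : ℝ) * v - (a : ℝ) * u) = (b' : ℝ) * v - (a' : ℝ) * u ↔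
        Matrix.vecMul ![(a : ℤ), (b : ℤ)] (M ^ m) = ![(a' : ℤ), (b' : ℤ)] := by
  have hpow : ∀ k : ℕ, ((M ^ k).map (Int.cast : ℤ → ℝ)).mulVec ![-u, v]
      = (t⁻¹) ^ k • ![-u, v] := by
    intro k
    induction k with
    | zero => simp
    | succ k ih =>
      have hmap : (M ^ (k + 1)).map (Int.cast : ℤ → ℝ)
          = ((M ^ k).map (Int.cast : ℤ → ℝ)) * (M.map (Int.cast : ℤ → ℝ)) := by
        rw [pow_succ]
        exact Matrix.map_mul (f := Int.castRingHom ℝ)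
      rw [hmap, ← Matrix.mulVec_mulVec, heig, Matrix.mulVec_smul, ih, smul_smul,
        ← pow_succ']
  intro m a b a' b'
  set N := M ^ m with hN
  have h0 := congrFun (hpow m) 0
  have h1 := congrFun (hpow m) 1
  simp [Matrix.mulVec, dotProduct, Fin.sum_univ_two, Matrix.map_apply] at h0 h1
  set c : ℤ := Matrix.vecMul ![(a : ℤ), (b : ℤ)] N 0 with hc
  set d : ℤ := Matrix.vecMul ![(a : ℤ), (b : ℤ)] N 1 with hd
  have hcv : (c : ℝ) = a * (N 0 0 : ℝ) + b * (N 1 0 : ℝ) := by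
    rw [hc]; simp [Matrix.vecMul, dotProduct, Fin.sum_univ_two]
  have hdv : (d : ℝ) = a * (N 0 1 : ℝ) + b * (N 1 1 : ℝ) := by
    rw [hd]; simp [Matrix.vecMul, dotProduct, Fin.sum_univ_two]
  have ht' : t ^ (-(m : ℤ)) = (t ^ m)⁻¹ := by
    rw [_root_.zpow_neg, zpow_natCast]
  have key : (d : ℝ) * v - (c : ℝ) * u = t ^ (-(m : ℤ)) * ((b : ℝ) * v - (a : ℝ) * u) := by
    rw [hcv, hdv, ht']
    linear_combination (a : ℝ) * h0 + (b : ℝ) * h1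
  constructor
  · intro h
    have h2 : (d : ℝ) * v - (c : ℝ) * u = (b' : ℝ) * v - (a' : ℝ) * u := by
      rw [key, h]
    obtain ⟨e1, e2⟩ := int_eq_of_lin u v hv hirr c d (a' : ℤ) (b' : ℤ) (by exact_mod_cast h2)
    funext i
    fin_cases i
    · simpa using e1
    · simpa using e2
  · intro h
    have e1 : c = (a' : ℤ) := by rw [hc, h]; rfl
    have e2 : d = (b' : ℤ) := by rw [hd, h]; rfl
    rw [← key, e1, e2]
    push_cast
    ring
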